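/- Let M, N ≥ 1 and W₁A, W₁B ∈ ℂ^{M×N}. Let V denote the vertical expansion operator taking (WA, WB) with WA, WB ∈ ℂ^{P×Q} to ([WA ; −J_P·conj(WB)·J_Q], [WB ; J_P·conj(WA)·J_Q]) ∈ ℂ^{2P×Q} × ℂ^{2P×Q}, and H the horizontal expansion operator taking (WA, WB) to ([WA , −J_P·conj(WB)·J_Q], [WB , J_P·conj(WA)·J_Q]) ∈ ℂ^{P×2Q} × ℂ^{P×2Q}. Then the order of expansion does not influence the total power pattern: for all ψy, ψz ∈ ℝ, the total power pattern of H(V(W₁A, W₁B)) at (ψy, ψz) equals the total power pattern of V(H(W₁A, W₁B)) at (ψy, ψz), both being 4·(|∑_{m<M,n<N}(W₁A)_{m,n}e^{i(nψy+mψz)}|² + |∑_{m<M,n<N}(W₁B)_{m,n}e^{i(nψy+mψz)}|²). -/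

import Mathlib

open Finset

/-- `(m,n)` entry of the steering matrix of an `M×N` uniform rectangular array:
`exp(i(n ψy + m ψz))`. -/
noncomputable def steerM (M N : ℕ) (ψy ψz : ℝ) : Fin M → Fin N → ℂ :=
  fun m n => Complex.exp (Complex.I * (((n : ℕ) : ℂ) * (ψy : ℂ) + ((m : ℕ) : ℂ) * (ψz : ℂ)))

/-- Radiated far field of an `M×N` array with excitation `W`:
`F(W) = ∑_{m,n} W m n · exp(i(n ψy + m ψz))`. -/
noncomputable def fieldF {M N : ℕ} (W : Fin M → Fin N → ℂ) (ψy ψz : ℝ) : ℂ :=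
  ∑ m, ∑ n, W m n * steerM M N ψy ψz m n

/-- Total power pattern of a dual-polarized pair of excitation matrices. -/
noncomputable def totalPattern {M N : ℕ}
    (W : (Fin M → Fin N → ℂ) × (Fin M → Fin N → ℂ)) (ψy ψz : ℝ) : ℝ :=
  ‖fieldF W.1 ψy ψz‖ ^ 2 + ‖fieldF W.2 ψy ψz‖ ^ 2

/-- Vertical ASI expansion: stack the companion `(-J·conj WB·J, J·conj WA·J)`
below the protoarray. -/
noncomputable def vexp {P Q : ℕ} (W : (Fin P → Fin Q → ℂ) × (Fin P → Fin Q → ℂ)) :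
    (Fin (P + P) → Fin Q → ℂ) × (Fin (P + P) → Fin Q → ℂ) :=
  (fun m n => Fin.append (fun i => W.1 i n)
      (fun i => -(starRingEnd ℂ) (W.2 i.rev n.rev)) m,
   fun m n => Fin.append (fun i => W.2 i n)
      (fun i => (starRingEnd ℂ) (W.1 i.rev n.rev)) m)

/-- Horizontal ASI expansion: append the companion `(-J·conj WB·J, J·conj WA·J)`
to the right of the protoarray. -/
noncomputable def hexp {P Q : ℕ} (W : (Fin P → Fin Q → ℂ) × (Fin P → Fin Q → ℂ)) :
    (Fin P → Fin (Q + Q) → ℂ) × (Fin P → Fin (Q + Q) → ℂ) :=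
  (fun m => Fin.append (fun j => W.1 m j)
      (fun j => -(starRingEnd ℂ) (W.2 m.rev j.rev)),
   fun m => Fin.append (fun j => W.2 m j)
      (fun j => (starRingEnd ℂ) (W.1 m.rev j.rev)))

noncomputable def phase (p q : ℕ) (ψy ψz : ℝ) : ℂ :=
  Complex.exp (Complex.I * ((q : ℂ) * (ψy : ℂ) + (p : ℂ) * (ψz : ℂ)))

lemma steer_conj {M N M' N' : ℕ} (ψy ψz : ℝ) (m : Fin M) (n : Fin N)
    (m' : Fin M') (n' : Fin N') (p q : ℕ)
    (hm : (m' : ℕ) + (m : ℕ) = p) (hn : (n' : ℕ) + (n : ℕ) = q) :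
    steerM M' N' ψy ψz m' n'
      = phase p q ψy ψz * (starRingEnd ℂ) (steerM M N ψy ψz m n) := by
  unfold steerM phase
  rw [← Complex.exp_conj, ← Complex.exp_add]
  congr 1
  subst hm hn
  push_cast
  simp only [map_add, map_mul, Complex.conj_I, Complex.conj_ofReal, map_natCast]
  ring

lemma sum_rev {P : ℕ} (f : Fin P → ℂ) : ∑ m : Fin P, f m.rev = ∑ m, f m := by
  simpa using Equiv.sum_comp Fin.revPerm f

lemma sum_rev2 {P Q : ℕ} (f : Fin P → Fin Q → ℂ) :
    ∑ m : Fin P, ∑ n : Fin Q, f m.rev n.rev = ∑ m, ∑ n, f m n :=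
  (Finset.sum_congr rfl fun m _ => sum_rev _).trans (sum_rev (fun m => ∑ n : Fin Q, f m n))

lemma fieldF_vexp_fst {P Q : ℕ} (WA WB : Fin P → Fin Q → ℂ) (ψy ψz : ℝ) :
    fieldF (vexp (WA, WB)).1 ψy ψz
      = fieldF WA ψy ψz
        - phase (P + P - 1) (Q - 1) ψy ψz * (starRingEnd ℂ) (fieldF WB ψy ψz) := by
  unfold fieldF vexp
  rw [Fin.sum_univ_add]
  simp only [Fin.append_left, Fin.append_right]
  have h1 : ∀ m : Fin P, ∀ n : Fin Q,
      steerM (P + P) Q ψy ψz (Fin.castAdd P m) n = steerM P Q ψy ψz m n := by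
    intro m n; unfold steerM; norm_num
  have h2 : ∑ m : Fin P, ∑ n : Fin Q,
      (-(starRingEnd ℂ) (WB m.rev n.rev)) * steerM (P + P) Q ψy ψz (Fin.natAdd P m) n
      = -(phase (P + P - 1) (Q - 1) ψy ψz
          * (starRingEnd ℂ) (∑ m : Fin P, ∑ n : Fin Q, WB m n * steerM P Q ψy ψz m n)) := by
    rw [← sum_rev2]
    rw [map_sum, Finset.mul_sum, ← Finset.sum_neg_distrib]
    refine Finset.sum_congr rfl fun m _ => ?_
    rw [map_sum, Finset.mul_sum, ← Finset.sum_neg_distrib]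
    refine Finset.sum_congr rfl fun n _ => ?_
    rw [steer_conj ψy ψz m n (Fin.natAdd P m.rev) n.rev (P + P - 1) (Q - 1)
      (by have := m.isLt; simp [Fin.val_rev]; omega)
      (by have := n.isLt; simp [Fin.val_rev]; omega)]
    rw [Fin.rev_rev, Fin.rev_rev, map_mul]
    ring
  rw [h2]
  simp only [h1]
  ring

lemma fieldF_neg {P Q : ℕ} (W : Fin P → Fin Q → ℂ) (ψy ψz : ℝ) :
    fieldF (fun m n => -(W m n)) ψy ψz = -(fieldF W ψy ψz) := by
  simp [fieldF, Finset.sum_neg_distrib]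

lemma fieldF_vexp_snd {P Q : ℕ} (WA WB : Fin P → Fin Q → ℂ) (ψy ψz : ℝ) :
    fieldF (vexp (WA, WB)).2 ψy ψz
      = fieldF WB ψy ψz
        + phase (P + P - 1) (Q - 1) ψy ψz * (starRingEnd ℂ) (fieldF WA ψy ψz) := by
  have h : (vexp (WA, WB)).2 = (vexp (WB, fun m n => -(WA m n))).1 := by
    funext m n; simp [vexp]
  rw [h, fieldF_vexp_fst, fieldF_neg, map_neg]
  ring

lemma fieldF_hexp_fst {P Q : ℕ} (WA WB : Fin P → Fin Q → ℂ) (ψy ψz : ℝ) :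
    fieldF (hexp (WA, WB)).1 ψy ψz
      = fieldF WA ψy ψz
        - phase (P - 1) (Q + Q - 1) ψy ψz * (starRingEnd ℂ) (fieldF WB ψy ψz) := by
  unfold fieldF hexp
  simp only
  have h1 : ∀ m : Fin P, ∀ n : Fin Q,
      steerM P (Q + Q) ψy ψz m (Fin.castAdd Q n) = steerM P Q ψy ψz m n := by
    intro m n; unfold steerM; norm_num
  have h2 : ∑ n : Fin Q, ∑ m : Fin P,
      (-(starRingEnd ℂ) (WB m.rev n.rev)) * steerM P (Q + Q) ψy ψz m (Fin.natAdd Q n)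
      = -(phase (P - 1) (Q + Q - 1) ψy ψz
          * (starRingEnd ℂ) (∑ n : Fin Q, ∑ m : Fin P, WB m n * steerM P Q ψy ψz m n)) := by
    rw [← sum_rev2]
    rw [map_sum, Finset.mul_sum, ← Finset.sum_neg_distrib]
    refine Finset.sum_congr rfl fun n _ => ?_
    rw [map_sum, Finset.mul_sum, ← Finset.sum_neg_distrib]
    refine Finset.sum_congr rfl fun m _ => ?_
    rw [steer_conj ψy ψz m n m.rev (Fin.natAdd Q n.rev) (P - 1) (Q + Q - 1)
      (by have := m.isLt; simp [Fin.val_rev]; omega)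
      (by have := n.isLt; simp [Fin.val_rev]; omega)]
    rw [Fin.rev_rev, Fin.rev_rev, map_mul]
    ring
  calc (∑ m : Fin P, ∑ n : Fin (Q + Q),
        Fin.append (fun j => WA m j) (fun j => -(starRingEnd ℂ) (WB m.rev j.rev)) n
          * steerM P (Q + Q) ψy ψz m n)
      = ∑ m : Fin P, ((∑ n : Fin Q, WA m n * steerM P Q ψy ψz m n)
          + ∑ n : Fin Q, (-(starRingEnd ℂ) (WB m.rev n.rev))
              * steerM P (Q + Q) ψy ψz m (Fin.natAdd Q n)) := by
        refine Finset.sum_congr rfl fun m _ => ?_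
        rw [Fin.sum_univ_add]
        simp only [Fin.append_left, Fin.append_right, h1]
    _ = (∑ m, ∑ n, WA m n * steerM P Q ψy ψz m n)
          + ∑ n : Fin Q, ∑ m : Fin P, (-(starRingEnd ℂ) (WB m.rev n.rev))
              * steerM P (Q + Q) ψy ψz m (Fin.natAdd Q n) := by
        rw [Finset.sum_add_distrib]
        congr 1
        exact Finset.sum_comm
    _ = _ := by
        rw [h2, show (∑ n : Fin Q, ∑ m : Fin P, WB m n * steerM P Q ψy ψz m n)
            = ∑ m, ∑ n, WB m n * steerM P Q ψy ψz m n from Finset.sum_comm]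
        ring

lemma fieldF_hexp_snd {P Q : ℕ} (WA WB : Fin P → Fin Q → ℂ) (ψy ψz : ℝ) :
    fieldF (hexp (WA, WB)).2 ψy ψz
      = fieldF WB ψy ψz
        + phase (P - 1) (Q + Q - 1) ψy ψz * (starRingEnd ℂ) (fieldF WA ψy ψz) := by
  have h : (hexp (WA, WB)).2 = (hexp (WB, fun m n => -(WA m n))).1 := by
    funext m n; simp [hexp]
  rw [h, fieldF_hexp_fst, fieldF_neg, map_neg]
  ring

lemma phase_mul_conj (p q : ℕ) (ψy ψz : ℝ) :
    phase p q ψy ψz * (starRingEnd ℂ) (phase p q ψy ψz) = 1 := by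
  unfold phase
  rw [← Complex.exp_conj, ← Complex.exp_add, ← Complex.exp_zero]
  congr 1
  simp only [map_add, map_mul, Complex.conj_I, Complex.conj_ofReal, map_natCast]
  ring

lemma key (a b x y : ℂ) (ha : a * (starRingEnd ℂ) a = 1) (hb : b * (starRingEnd ℂ) b = 1) :
    ‖(x - a * (starRingEnd ℂ) y)
        - b * (starRingEnd ℂ) (y + a * (starRingEnd ℂ) x)‖ ^ 2
      + ‖(y + a * (starRingEnd ℂ) x)
        + b * (starRingEnd ℂ) (x - a * (starRingEnd ℂ) y)‖ ^ 2
      = 4 * (‖x‖ ^ 2 + ‖y‖ ^ 2) := by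
  simp only [Complex.sq_norm]
  apply Complex.ofReal_injective
  push_cast [← Complex.mul_conj]
  simp only [map_sub, map_add, map_mul, Complex.conj_conj]
  linear_combination (x * (starRingEnd ℂ) x + y * (starRingEnd ℂ) y)
      * (b * (starRingEnd ℂ) b + 1) * ha
    + 2 * (x * (starRingEnd ℂ) x + y * (starRingEnd ℂ) y) * hb

theorem asi_ura_expansion_order_irrelevant
    (M N : ℕ) (hM : 1 ≤ M) (hN : 1 ≤ N)
    (W1A W1B : Fin M → Fin N → ℂ) (ψy ψz : ℝ) :
    totalPattern (hexp (vexp (W1A, W1B))) ψy ψz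
        = totalPattern (vexp (hexp (W1A, W1B))) ψy ψz
      ∧ totalPattern (hexp (vexp (W1A, W1B))) ψy ψz
        = 4 * (‖fieldF W1A ψy ψz‖ ^ 2
            + ‖fieldF W1B ψy ψz‖ ^ 2) := by
  have hHV : totalPattern (hexp (vexp (W1A, W1B))) ψy ψz
      = 4 * (‖fieldF W1A ψy ψz‖ ^ 2
          + ‖fieldF W1B ψy ψz‖ ^ 2) := by
    rw [totalPattern, fieldF_hexp_fst, fieldF_hexp_snd,
      fieldF_vexp_fst, fieldF_vexp_snd]
    exact key _ _ _ _ (phase_mul_conj _ _ _ _) (phase_mul_conj _ _ _ _)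
  have hVH : totalPattern (vexp (hexp (W1A, W1B))) ψy ψz
      = 4 * (‖fieldF W1A ψy ψz‖ ^ 2
          + ‖fieldF W1B ψy ψz‖ ^ 2) := by
    rw [totalPattern, fieldF_vexp_fst, fieldF_vexp_snd,
      fieldF_hexp_fst, fieldF_hexp_snd]
    exact key _ _ _ _ (phase_mul_conj _ _ _ _) (phase_mul_conj _ _ _ _)
  exact ⟨hHV.trans hVH.symm, hHV⟩
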